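/- The node values x(b, d) of a rectified wire network, for fixed input d, are convex functions of the full vector of bias parameters b. -/

import Mathlib

/-- A rectified wire network: a finite DAG (edges go from lower to higher index)
with a positive weight on every node. -/
structure RWNet where
  n : ℕ
  edge : Fin n → Fin n → Bool
  edge_lt : ∀ i j, edge i j = true → i < j
  weight : Fin n → ℝ
  weight_pos : ∀ j, 0 < weight j

namespace RWNet

/-- Input nodes: in-degree zero. -/
def isInput (net : RWNet) (j : Fin net.n) : Prop := ∀ i, net.edge i j = false

/-- Output nodes: out-degree zero. -/
def isOutput (net : RWNet) (i : Fin net.n) : Prop := ∀ j, net.edge i j = false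

/-- Node values: input nodes carry the data `d`; any other node `j` has value
`w_j * Σ_{i→j} max(0, x_i − b_{i→j})`. -/
def value (net : RWNet) (b : Fin net.n → Fin net.n → ℝ) (d : Fin net.n → ℝ) :
    Fin net.n → ℝ := fun j =>
  if (∀ i, net.edge i j = false) then d j
  else
    net.weight j *
      ∑ i ∈ (Finset.univ.filter fun i => net.edge i j = true).attach,
        max 0 (net.value b d i.1 - b i.1 j)
termination_by j => j.val
decreasing_by
  have h := i.2
  simp only [Finset.mem_filter, Finset.mem_univ, true_and] at h
  exact net.edge_lt _ _ h

/-- Reachability along directed edges. -/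
inductive Reaches (net : RWNet) : Fin net.n → Fin net.n → Prop
  | refl (i : Fin net.n) : Reaches net i i
  | step {i j k : Fin net.n} : net.edge i j = true → Reaches net j k → Reaches net i k

end RWNet

private lemma convexOn_finset_sum {E : Type*} [AddCommGroup E] [Module ℝ E]
    {ι : Type*} [DecidableEq ι] (t : Finset ι) {f : ι → E → ℝ}
    (h : ∀ i ∈ t, ConvexOn ℝ Set.univ (f i)) :
    ConvexOn ℝ Set.univ (fun x => ∑ i ∈ t, f i x) := by
  induction t using Finset.induction with
  | empty => simpa using convexOn_const (0 : ℝ) convex_univ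
  | insert _ _ hi ih =>
    simp only [Finset.sum_insert hi]
    exact (h _ (Finset.mem_insert_self _ _)).add
      (ih fun i hit => h i (Finset.mem_insert_of_mem hit))

private lemma convexOn_neg_coord {n : ℕ} (i j : Fin n) :
    ConvexOn ℝ Set.univ (fun b : Fin n → Fin n → ℝ => -(b i j)) := by
  refine ⟨convex_univ, ?_⟩
  intro x _ y _ a c ha hc hab
  simp only [Pi.add_apply, Pi.smul_apply, smul_eq_mul]
  ring_nf
  exact le_refl _

/-- Theorem 5: for fixed input `d`, every node value of a rectified wire network
is a convex function of the full vector of bias parameters. -/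
theorem value_convexOn_biases (net : RWNet) (d : Fin net.n → ℝ) (j : Fin net.n) :
    ConvexOn ℝ Set.univ (fun b : Fin net.n → Fin net.n → ℝ => net.value b d j) := by
  by_cases h : ∀ i, net.edge i j = false
  · have heq : (fun b : Fin net.n → Fin net.n → ℝ => net.value b d j) = fun _ => d j := by
      funext b; rw [RWNet.value]; simp [h]
    rw [heq]; exact convexOn_const _ convex_univ
  · have heq : (fun b : Fin net.n → Fin net.n → ℝ => net.value b d j) =
        fun b => net.weight j *
          ∑ i ∈ (Finset.univ.filter fun i => net.edge i j = true).attach,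
            max 0 (net.value b d i.1 - b i.1 j) := by
      funext b; rw [RWNet.value]; simp [h]
    rw [heq]
    have hsum : ConvexOn ℝ Set.univ
        (fun b : Fin net.n → Fin net.n → ℝ =>
          ∑ i ∈ (Finset.univ.filter fun i => net.edge i j = true).attach,
            max 0 (net.value b d i.1 - b i.1 j)) := by
      apply convexOn_finset_sum
      intro i _
      have hi : (i : Fin net.n) < j := by
        have hm := i.2
        simp only [Finset.mem_filter, Finset.mem_univ, true_and] at hm
        exact net.edge_lt _ _ hm
      have hconv : ConvexOn ℝ Set.univ
          (fun b : Fin net.n → Fin net.n → ℝ => net.value b d i.1 - b i.1 j) := by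
        have := (value_convexOn_biases net d i.1).add (convexOn_neg_coord i.1 j)
        simpa [sub_eq_add_neg, Pi.add_def] using this
      exact (convexOn_const (0 : ℝ) convex_univ).sup hconv
    have := hsum.smul (le_of_lt (net.weight_pos j))
    simpa [smul_eq_mul] using this
termination_by j.val
decreasing_by
  exact hi
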